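/- A numerical semigroup S ≠ ℕ has maximal embedding dimension (i.e., its number of atoms equals m(S)) if and only if S' = {x − m(S) : x ∈ S, x > 0} is a numerical semigroup. -/

import Mathlib

open Set

def IsNumericalSet (S : Set ℕ) : Prop := 0 ∈ S ∧ Sᶜ.Finite

def IsNumericalSemigroup (S : Set ℕ) : Prop :=
  IsNumericalSet S ∧ ∀ a ∈ S, ∀ b ∈ S, a + b ∈ S

/-- The associated set `A(S) = {s ∈ S : s + S ⊆ S}`. -/
def A (S : Set ℕ) : Set ℕ := {s ∈ S | ∀ t ∈ S, s + t ∈ S}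

/-- The Frobenius number: the largest gap of `S`. -/
noncomputable def F (S : Set ℕ) : ℕ := sSup Sᶜ

/-- The base: the largest element of `S` below `F S`. -/
noncomputable def B (S : Set ℕ) : ℕ := sSup {s | s ∈ S ∧ s < F S}

/-- The multiplicity: the smallest positive element of `S`. -/
noncomputable def m (S : Set ℕ) : ℕ := sInf {s | s ∈ S ∧ 0 < s}

/-- The complement numerical set (for `S ≠ ℕ`). -/
noncomputable def Stilde (S : Set ℕ) : Set ℕ :=
  {x | ∃ s ∈ S, s ≤ B S ∧ x = B S - s} ∪ {n | B S ≤ n}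

-- The complement operation, with the convention that the complement of ℕ is ℕ.
open Classical in
noncomputable def complOp (S : Set ℕ) : Set ℕ :=
  if S = Set.univ then Set.univ else Stilde S

/-- The genus: the number of gaps. -/
noncomputable def genus (S : Set ℕ) : ℕ := Sᶜ.ncard

/-- The number of boxes with hook length 1. -/
noncomputable def c1 (S : Set ℕ) : ℕ := {n | n ∈ S ∧ n + 1 ∉ S}.ncard

/-- An atom: a positive element not a sum of two positive elements. -/
def IsAtomOf (S : Set ℕ) (a : ℕ) : Prop :=
  a ∈ S ∧ 0 < a ∧ ¬ ∃ x ∈ S, ∃ y ∈ S, 0 < x ∧ 0 < y ∧ a = x + y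

/-- A small atom: an atom smaller than the Frobenius number. -/
def IsSmallAtom (S : Set ℕ) (a : ℕ) : Prop := IsAtomOf S a ∧ a < F S

/-- The embedding dimension: the number of atoms. -/
noncomputable def numAtoms (S : Set ℕ) : ℕ := {a | IsAtomOf S a}.ncard

/-- Maximal embedding dimension. -/
def MaxED (S : Set ℕ) : Prop := numAtoms S = m S


theorem max_embedding_dimension_iff (S : Set ℕ) (hS : IsNumericalSemigroup S)
    (hne : S ≠ Set.univ) :
    MaxED S ↔ IsNumericalSemigroup {y | ∃ x ∈ S, 0 < x ∧ y = x - m S} := by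
  obtain ⟨⟨h0, hfin⟩, hadd⟩ := hS
  obtain ⟨N, hN⟩ : ∃ N, ∀ x, N ≤ x → x ∈ S := by
    obtain ⟨Bb, hB⟩ := hfin.bddAbove
    refine ⟨Bb + 1, fun x hx => ?_⟩
    by_contra hxn
    exact absurd (hB hxn) (by omega)
  have hμne : {s | s ∈ S ∧ 0 < s}.Nonempty := ⟨N + 1, hN _ (by omega), by omega⟩
  have hμmem : m S ∈ {s | s ∈ S ∧ 0 < s} := Nat.sInf_mem hμne
  set μ := m S with hμdef
  obtain ⟨hμS, hμpos⟩ := hμmem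
  have hμle : ∀ s ∈ S, 0 < s → μ ≤ s := fun s hs hp => Nat.sInf_le ⟨hs, hp⟩
  have hkm : ∀ w ∈ S, ∀ k, w + μ * k ∈ S := by
    intro w hw k
    induction k with
    | zero => simpa using hw
    | succ n ih =>
        have h2 := hadd _ ih _ hμS
        have : w + μ * n + μ = w + μ * (n + 1) := by ring
        rwa [this] at h2
  set Ap : Set ℕ := {w | w ∈ S ∧ (w = 0 ∨ w - μ ∉ S)} with hApdef
  have key : ∀ a ∈ Ap, ∀ b ∈ Ap, a < b → a % μ ≠ b % μ := by
    intro a ha b hb hlt heq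
    have hb2 : b - μ ∉ S := hb.2.resolve_left (by omega)
    have hdvd : μ ∣ b - a := (Nat.modEq_iff_dvd' (le_of_lt hlt)).mp heq
    obtain ⟨k, hk⟩ := hdvd
    rcases k with _ | j
    · simp at hk; omega
    · have h2 : b - a = μ * j + μ := by rw [hk]; ring
      have h3 : a + μ * j ∈ S := hkm a ha.1 j
      set d := μ * j with hd
      have h4 : b - μ = a + d := by omega
      exact hb2 (h4 ▸ h3)
  have hsurj : ∀ r < μ, ∃ w ∈ Ap, w % μ = r := by
    intro r hr
    have hTne : {w | w ∈ S ∧ w % μ = r}.Nonempty := by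
      refine ⟨r + μ * N, hN _ ?_, ?_⟩
      · have : N ≤ μ * N := Nat.le_mul_of_pos_left N hμpos
        omega
      · simp [Nat.add_mul_mod_self_left, Nat.mod_eq_of_lt hr]
    obtain ⟨hwS, hwr⟩ := Nat.sInf_mem hTne
    set w := sInf {w | w ∈ S ∧ w % μ = r} with hw
    refine ⟨w, ⟨hwS, ?_⟩, hwr⟩
    by_contra hcon
    push_neg at hcon
    obtain ⟨hw0, hwμ⟩ := hcon
    have hwge : μ ≤ w := hμle w hwS (Nat.pos_of_ne_zero hw0)
    have hmem : w - μ ∈ {w | w ∈ S ∧ w % μ = r} := by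
      refine ⟨hwμ, ?_⟩
      have heq : w - μ + μ = w := by omega
      calc (w - μ) % μ = (w - μ + μ) % μ := (Nat.add_mod_right _ _).symm
        _ = w % μ := by rw [heq]
        _ = r := hwr
    have := Nat.sInf_le hmem
    omega
  have hApfin : Ap.Finite := by
    apply Set.Finite.subset ((hfin.image (· + μ)).insert 0)
    rintro w ⟨hwS, hc⟩
    rcases hc with rfl | hmem
    · exact Set.mem_insert _ _
    · have hw0 : w ≠ 0 := by
        rintro rfl
        exact hmem (by simpa using h0)
      have hwge : μ ≤ w := hμle w hwS (Nat.pos_of_ne_zero hw0)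
      exact Set.mem_insert_of_mem _ ⟨w - μ, hmem, show w - μ + μ = w by omega⟩
  have himg : (· % μ) '' Ap = Set.Iio μ := by
    ext r
    constructor
    · rintro ⟨w, _, rfl⟩; exact Nat.mod_lt _ hμpos
    · intro hr
      obtain ⟨w, hw, hwr⟩ := hsurj r hr
      exact ⟨w, hw, hwr⟩
  have hApcard : Ap.ncard = μ := by
    have hinj : Set.InjOn (· % μ) Ap := by
      intro a ha b hb hab
      rcases lt_trichotomy a b with h | h | h
      · exact absurd hab (key a ha b hb h)
      · exact h
      · exact absurd hab.symm (key b hb a ha h)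
    rw [← Set.ncard_image_of_injOn hinj, himg,
      show (Set.Iio μ) = ↑(Finset.Iio μ) by simp, Set.ncard_coe_finset, Nat.card_Iio]
  set At := {a | IsAtomOf S a} with hAtdef
  have hμatom : μ ∈ At := by
    refine ⟨hμS, hμpos, ?_⟩
    rintro ⟨x, hx, y, hy, hxp, hyp, hxy⟩
    have := hμle x hx hxp
    have := hμle y hy hyp
    omega
  have hAtsub : At ⊆ insert μ (Ap \ {0}) := by
    rintro a ⟨haS, hap, hna⟩
    by_cases ha : a = μ
    · exact ha ▸ Set.mem_insert _ _
    · refine Set.mem_insert_of_mem _ ⟨⟨haS, Or.inr ?_⟩, by simp; omega⟩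
      intro hsub
      have haμ : μ ≤ a := hμle a haS hap
      have haμ' : μ < a := lt_of_le_of_ne haμ (Ne.symm ha)
      exact hna ⟨μ, hμS, a - μ, hsub, hμpos, by omega, by omega⟩
  have hμnotAp : μ ∉ Ap \ {0} := by
    rintro ⟨⟨_, hc⟩, _⟩
    rcases hc with hc | hc
    · omega
    · exact hc (by simpa [Nat.sub_self] using h0)
  have h0Ap : (0 : ℕ) ∈ Ap := ⟨h0, Or.inl rfl⟩
  have hInsCard : (insert μ (Ap \ {0})).ncard = μ := by
    rw [Set.ncard_insert_of_notMem hμnotAp hApfin.diff,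
      Set.ncard_diff_singleton_of_mem h0Ap, hApcard]
    omega
  have hMED : MaxED S ↔ Ap \ {0} ⊆ At := by
    unfold MaxED numAtoms
    rw [← hμdef, ← hAtdef]
    constructor
    · intro h
      have hfins : (insert μ (Ap \ {0})).Finite := hApfin.diff.insert _
      have heq : At = insert μ (Ap \ {0}) :=
        Set.eq_of_subset_of_ncard_le hAtsub (le_of_eq (by rw [hInsCard, h])) hfins
      intro x hx
      rw [heq]
      exact Set.mem_insert_of_mem _ hx
    · intro h
      have heq : At = insert μ (Ap \ {0}) :=
        Set.Subset.antisymm hAtsub (Set.insert_subset hμatom h)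
      rw [heq, hInsCard]
  have hP : (Ap \ {0} ⊆ At) ↔ ∀ x ∈ S, ∀ y ∈ S, 0 < x → 0 < y → x + y - μ ∈ S := by
    constructor
    · intro h x hx y hy hxp hyp
      by_contra hc
      have hw : x + y ∈ Ap \ {0} := ⟨⟨hadd _ hx _ hy, Or.inr hc⟩, by simp; omega⟩
      obtain ⟨_, _, hna⟩ := h hw
      exact hna ⟨x, hx, y, hy, hxp, hyp, rfl⟩
    · rintro h w ⟨⟨hwS, hcase⟩, hw0⟩
      have hw0' : w ≠ 0 := by simpa using hw0
      refine ⟨hwS, Nat.pos_of_ne_zero hw0', ?_⟩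
      rintro ⟨x, hx, y, hy, hxp, hyp, rfl⟩
      have hS : x + y - μ ∈ S := h x hx y hy hxp hyp
      have hge : μ ≤ x := hμle x hx hxp
      rcases hcase with h0' | hns
      · omega
      · exact hns hS
  rw [hMED, hP]
  unfold IsNumericalSemigroup IsNumericalSet
  constructor
  · intro h
    refine ⟨⟨⟨μ, hμS, hμpos, by omega⟩, ?_⟩, ?_⟩
    · apply Set.Finite.subset (Set.finite_Iio N)
      intro y hy
      simp only [Set.mem_compl_iff, Set.mem_setOf_eq] at hy
      by_contra hyN
      simp only [Set.mem_Iio, not_lt] at hyN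
      exact hy ⟨y + μ, hN _ (by omega), by omega, by omega⟩
    · rintro a ⟨x, hx, hxp, rfl⟩ b ⟨y, hy, hyp, rfl⟩
      have hxμ := hμle x hx hxp
      have hyμ := hμle y hy hyp
      exact ⟨x + y - μ, h x hx y hy hxp hyp, by omega, by omega⟩
  · rintro ⟨_, hcl⟩ x hx y hy hxp hyp
    have hxμ := hμle x hx hxp
    have hyμ := hμle y hy hyp
    obtain ⟨z, hz, hzp, hzeq⟩ := hcl _ ⟨x, hx, hxp, rfl⟩ _ ⟨y, hy, hyp, rfl⟩
    have hzμ := hμle z hz hzp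
    have hxyz : x + y - μ = z := by omega
    rw [hxyz]; exact hz
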